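/- The in-order counter assignment TAssignSub assigns distinct labels to distinct nodes of a binary tree: after an in-order traversal that increments a counter at each visited node, the labeling function is injective, and the labels of any subtree form a contiguous interval of integers. -/

import Mathlib

inductive BTree where
  | leaf : BTree
  | node : BTree → BTree → BTree

/-- In-order traversal listing node positions (paths from the root,
false = left, true = right); the in-order label of a node is its index here. -/
def BTree.inorderPos : BTree → List (List Bool)
  | .leaf => [[]]
  | .node l r =>
      (BTree.inorderPos l).map (List.cons false) ++ [[]] ++
        (BTree.inorderPos r).map (List.cons true)

private lemma idx_left (ll lr : List (List Bool)) (i : ℕ) (hi : i < ll.length) :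
    (ll.map (List.cons false) ++ [[]] ++ lr.map (List.cons true))[i]! = false :: ll[i]! := by
  rw [getElem!_pos _ i (by simp; omega), getElem!_pos ll i hi]
  rw [List.getElem_append_left (by simp; omega), List.getElem_append_left (by simpa)]
  simp

private lemma idx_mid (ll lr : List (List Bool)) :
    (ll.map (List.cons false) ++ [[]] ++ lr.map (List.cons true))[ll.length]! = [] := by
  rw [getElem!_pos _ _ (by simp)]
  rw [List.getElem_append_left (by simp), List.getElem_append_right (by simp)]
  simp

private lemma idx_right (ll lr : List (List Bool)) (j : ℕ) (hj : j < lr.length) :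
    (ll.map (List.cons false) ++ [[]] ++ lr.map (List.cons true))[ll.length + 1 + j]! = true :: lr[j]! := by
  rw [getElem!_pos _ _ (by simp; omega), getElem!_pos lr j hj]
  rw [List.getElem_append_right (by simp)]
  simp

/-- In-order counter assignment gives distinct labels to distinct nodes, and the
labels of any subtree (nodes whose position has a given prefix) form a
contiguous interval. -/
theorem inorder_labels (t : BTree) :
    (BTree.inorderPos t).Nodup ∧
    ∀ p : List Bool, ∃ a b : ℕ,
      ∀ i, i < (BTree.inorderPos t).length →
        ((p <+: (BTree.inorderPos t)[i]!) ↔ (a ≤ i ∧ i < b)) := by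
  induction t with
  | leaf =>
    refine ⟨by simp [BTree.inorderPos], ?_⟩
    intro p
    match p with
    | [] =>
      refine ⟨0, 1, ?_⟩
      intro i hi
      simp only [BTree.inorderPos, List.length_cons, List.length_nil] at hi
      have : i = 0 := by omega
      subst this
      show ([] : List Bool) <+: ([[]] : List (List Bool))[0]! ↔ _
      rw [getElem!_pos _ 0 (by simp)]
      simp
    | x :: q =>
      refine ⟨0, 0, ?_⟩
      intro i hi
      simp only [BTree.inorderPos, List.length_cons, List.length_nil] at hi
      have : i = 0 := by omega
      subst this
      show (x :: q) <+: ([[]] : List (List Bool))[0]! ↔ _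
      rw [getElem!_pos _ 0 (by simp)]
      simp
  | node l r ihl ihr =>
    obtain ⟨hnl, hpl⟩ := ihl
    obtain ⟨hnr, hpr⟩ := ihr
    set ll := BTree.inorderPos l with hll
    set lr := BTree.inorderPos r with hlr
    have hlen : (BTree.inorderPos (BTree.node l r)).length = ll.length + 1 + lr.length := by
      show (ll.map (List.cons false) ++ [[]] ++ lr.map (List.cons true)).length = _
      simp
      omega
    constructor
    · show (ll.map (List.cons false) ++ [[]] ++ lr.map (List.cons true)).Nodup
      rw [List.nodup_append, List.nodup_append]
      refine ⟨⟨hnl.map (fun _ _ h => by simpa using h), by simp, ?_⟩,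
        hnr.map (fun _ _ h => by simpa using h), ?_⟩
      · intro x hx _ hy rfl
        simp at hx
        obtain ⟨u, _, rfl⟩ := hx
        simp at hy
      · intro x hx _ hy rfl
        simp at hy
        obtain ⟨v, _, rfl⟩ := hy
        rcases List.mem_append.1 hx with hx | hx <;> simp at hx
    · intro p
      match p with
      | [] =>
        refine ⟨0, (BTree.inorderPos (BTree.node l r)).length, ?_⟩
        intro i hi
        simpa using hi
      | false :: q =>
        obtain ⟨a, b, h⟩ := hpl q
        refine ⟨min a ll.length, min b ll.length, ?_⟩
        intro i hi
        rw [hlen] at hi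
        show (false :: q <+: (ll.map (List.cons false) ++ [[]] ++ lr.map (List.cons true))[i]!) ↔ _
        rcases lt_or_ge i ll.length with hil | hil
        · rw [idx_left ll lr i hil, List.cons_prefix_cons]
          simp only [true_and]
          rw [h i hil]
          omega
        · rcases eq_or_lt_of_le hil with rfl | hil'
          · rw [idx_mid]
            simp only [List.prefix_nil]
            constructor
            · intro hc; exact absurd hc (by simp)
            · intro hc; omega
          · obtain ⟨j, hj, rfl⟩ : ∃ j, j < lr.length ∧ i = ll.length + 1 + j :=
              ⟨i - (ll.length + 1), by omega, by omega⟩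
            rw [idx_right ll lr j hj, List.cons_prefix_cons]
            simp only [Bool.false_eq_true, false_and]
            constructor
            · intro hc; exact hc.elim
            · intro hc; omega
      | true :: q =>
        obtain ⟨a, b, h⟩ := hpr q
        refine ⟨a + ll.length + 1, b + ll.length + 1, ?_⟩
        intro i hi
        rw [hlen] at hi
        show (true :: q <+: (ll.map (List.cons false) ++ [[]] ++ lr.map (List.cons true))[i]!) ↔ _
        rcases lt_or_ge i ll.length with hil | hil
        · rw [idx_left ll lr i hil, List.cons_prefix_cons]
          simp only [Bool.true_eq_false, false_and]
          constructor
          · intro hc; exact hc.elim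
          · intro hc; omega
        · rcases eq_or_lt_of_le hil with rfl | hil'
          · rw [idx_mid]
            simp only [List.prefix_nil]
            constructor
            · intro hc; exact absurd hc (by simp)
            · intro hc; omega
          · obtain ⟨j, hj, rfl⟩ : ∃ j, j < lr.length ∧ i = ll.length + 1 + j :=
              ⟨i - (ll.length + 1), by omega, by omega⟩
            rw [idx_right ll lr j hj, List.cons_prefix_cons]
            simp only [true_and]
            rw [h j hj]
            omega
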